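/- For every n ≥ 1, real numbers a < b, and real d, ∫_a^b S_n(u; a, b, d) du = 2^n (b−a)^{n+1} B_n(1/2 + d/(b−a)). -/

import Mathlib

open scoped BigOperators
open MeasureTheory

/-- MacMahon numbers `M n k`: `M n 1 = 1`, `M n k = 0` outside `1 ≤ k ≤ n`, and
`M n k = (2k−1) M (n−1) k + (2n−2k+1) M (n−1) (k−1)`. -/
def macmahon : ℕ → ℕ → ℕ
  | 0, _ => 0
  | 1, 1 => 1
  | 1, _ => 0
  | n + 2, 0 => 0
  | n + 2, k + 1 =>
      (2 * k + 1) * macmahon (n + 1) (k + 1) +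
        (2 * (n + 2) - 2 * (k + 1) + 1) * macmahon (n + 1) k

/-- Derivative polynomial `Q_n(u;a,b) = Σ_{k=1}^{n+1} M_{n+1,k} (u-a)^(n+1-k) (u-b)^(k-1)`. -/
noncomputable def Q (n : ℕ) (a b u : ℝ) : ℝ :=
  ∑ k ∈ Finset.Icc 1 (n + 1), (macmahon (n + 1) k : ℝ) * (u - a) ^ (n + 1 - k) * (u - b) ^ (k - 1)

/-- `S_n(u;a,b,d) = Σ_{k=0}^n C(n,k) (2d)^k Q_{n-k}(u;a,b)`. -/
noncomputable def S (n : ℕ) (a b d u : ℝ) : ℝ :=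
  ∑ k ∈ Finset.range (n + 1), (n.choose k : ℝ) * (2 * d) ^ k * Q (n - k) a b u

/-- The `n`-th Bernoulli polynomial evaluated at a real `x`
(convention `t e^{xt}/(e^t - 1) = Σ B_n(x) t^n / n!`). -/
noncomputable def bernPoly (n : ℕ) (x : ℝ) : ℝ :=
  ((Polynomial.bernoulli n).map (algebraMap ℚ ℝ)).eval x

namespace IntegralSAux

open Polynomial Finset

/-! ### Basic facts about MacMahon numbers -/

lemma macmahon_succ (n k : ℕ) : macmahon (n+2) (k+1) =
    (2*k+1) * macmahon (n+1) (k+1) + (2*(n+2) - 2*(k+1) + 1) * macmahon (n+1) k := rfl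

lemma macmahon_zero_right : ∀ n, macmahon n 0 = 0
  | 0 => rfl
  | 1 => rfl
  | _ + 2 => rfl

lemma macmahon_of_lt : ∀ n k, n < k → macmahon n k = 0
  | 0, _, _ => rfl
  | 1, 0, h => by omega
  | 1, 1, h => by omega
  | 1, k+2, _ => rfl
  | n+2, 0, h => by omega
  | n+2, k+1, h => by
      rw [macmahon_succ, macmahon_of_lt (n+1) (k+1) (by omega),
        macmahon_of_lt (n+1) k (by omega)]
      simp

lemma macmahon_one_right : ∀ n, macmahon (n+1) 1 = 1
  | 0 => rfl
  | n+1 => by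
      have h := macmahon_succ n 0
      rw [h, macmahon_one_right n, macmahon_zero_right]
      simp

/-! ### The polynomial version of `Q` -/

noncomputable def QP (a b : ℝ) (n : ℕ) : ℝ[X] :=
  ∑ j ∈ range (n+1), C (macmahon (n+1) (j+1) : ℝ) * (X - C a) ^ (n - j) * (X - C b) ^ j

lemma Q_eq_eval (n : ℕ) (a b u : ℝ) : Q n a b u = (QP a b n).eval u := by
  rw [Q, QP, eval_finset_sum]
  rw [show Finset.Icc 1 (n+1) = Finset.Ico 1 (n+2) from (Finset.Ico_add_one_right_eq_Icc 1 (n+1)).symm]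
  rw [Finset.sum_Ico_eq_sum_range]
  refine sum_congr (by congr 1) fun j hj => ?_
  simp only [eval_mul, eval_pow, eval_sub, eval_X, eval_C]
  have h1 : 1 + j - 1 = j := by omega
  have h2 : n + 1 - (1 + j) = n - j := by omega
  have h3 : 1 + j = j + 1 := by omega
  rw [h1, h2, h3]

lemma QP_zero (a b : ℝ) : QP a b 0 = 1 := by
  have : macmahon 1 1 = 1 := rfl
  simp [QP, this]

/-- The key recurrence for the `Q` polynomials. -/
lemma QP_succ (a b : ℝ) (n : ℕ) :
    QP a b (n+1) = ((X - C a) + (X - C b)) * QP a b n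
      + C 2 * (X - C a) * (X - C b) * (QP a b n).derivative := by
  have hsplit : QP a b (n+1)
      = (∑ j ∈ range (n+1),
          C (((2*j+1) * macmahon (n+1) (j+1) : ℕ) : ℝ) * (X - C a)^(n+1-j) * (X - C b)^j)
      + ∑ j ∈ range (n+1),
          C (((2*(n-j)+1) * macmahon (n+1) (j+1) : ℕ) : ℝ) * (X - C a)^(n-j) * (X - C b)^(j+1) := by
    rw [QP]
    have step1 : ∀ j ∈ range (n+2),
        C ((macmahon (n+2) (j+1) : ℕ) : ℝ) * (X - C a)^(n+1-j) * (X - C b)^j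
        = C (((2*j+1) * macmahon (n+1) (j+1) : ℕ):ℝ) * (X - C a)^(n+1-j) * (X - C b)^j
          + C (((2*(n+1-j)+1) * macmahon (n+1) j : ℕ):ℝ) * (X - C a)^(n+1-j) * (X - C b)^j := by
      intro j hj
      have hj' : j ≤ n + 1 := by simpa [Nat.lt_succ_iff] using hj
      have hm : macmahon (n+2) (j+1)
          = (2*j+1) * macmahon (n+1) (j+1) + (2*(n+1-j)+1) * macmahon (n+1) j := by
        rw [macmahon_succ]; congr 2; omega
      rw [hm, Nat.cast_add, map_add, add_mul, add_mul]
    rw [sum_congr rfl step1, sum_add_distrib]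
    congr 1
    · rw [sum_range_succ, macmahon_of_lt (n+1) (n+2) (by omega)]
      simp
    · rw [sum_range_succ' _ (n+1)]
      simp only [Nat.succ_sub_succ, macmahon_zero_right, Nat.mul_zero, Nat.cast_zero, map_zero,
        zero_mul, add_zero, Nat.sub_zero]
  rw [hsplit, QP, derivative_sum, Finset.mul_sum, Finset.mul_sum, ← sum_add_distrib,
    ← sum_add_distrib]
  refine sum_congr rfl fun j hj => ?_
  have hj' : j ≤ n := Nat.lt_succ_iff.mp (mem_range.mp hj)
  have he : n + 1 - j = (n - j) + 1 := by omega
  rw [he]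
  simp only [derivative_mul, derivative_pow, derivative_sub, derivative_X, derivative_C,
    sub_zero, mul_one, zero_mul, zero_add, mul_zero]
  push_cast
  simp only [map_mul, map_add, map_one, map_ofNat]
  obtain ⟨t, ht⟩ : ∃ t, n - j = t := ⟨n - j, rfl⟩
  rw [ht]
  clear ht he hj hj'
  rcases t with _ | t <;> rcases j with _ | j <;>
    simp only [pow_succ, pow_zero, Nat.sub_zero, Nat.add_sub_cancel, Nat.cast_zero, map_zero,
      Nat.cast_add, Nat.cast_one, map_add, map_one, one_mul, Nat.zero_sub, Nat.cast_ofNat] <;>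
    push_cast <;> ring

/-! ### Binomially weighted families -/

noncomputable def WP (a b c : ℝ) (n : ℕ) : ℝ[X] :=
  ∑ i ∈ range (n+1), C ((n.choose i : ℝ) * c^(n-i)) * QP a b i

lemma WP_zero (a b c : ℝ) : WP a b c 0 = 1 := by
  simp [WP, QP_zero]

lemma WP_succ (a b c : ℝ) (n : ℕ) :
    WP a b c (n+1) = (C c + ((X - C a) + (X - C b))) * WP a b c n
      + C 2 * (X - C a) * (X - C b) * (WP a b c n).derivative := by
  have hW : WP a b c (n+1)
      = (∑ i ∈ range (n+1), C ((n.choose i : ℝ) * c^(n-i)) * QP a b (i+1))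
        + ∑ i ∈ range (n+2), C ((n.choose i : ℝ) * c^(n+1-i)) * QP a b i := by
    rw [WP, sum_range_succ' _ (n+1),
      sum_range_succ' (fun i => C ((n.choose i : ℝ) * c^(n+1-i)) * QP a b i) (n+1),
      ← add_assoc, ← sum_add_distrib]
    congr 1
    · refine sum_congr rfl fun i hi => ?_
      simp only [Nat.add_sub_add_right]
      rw [Nat.choose_succ_succ, Nat.cast_add, add_mul, map_add, add_mul]
    · simp
  have hsum2 : ∑ i ∈ range (n+2), C ((n.choose i : ℝ) * c^(n+1-i)) * QP a b i
      = C c * WP a b c n := by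
    rw [sum_range_succ, Nat.choose_succ_self]
    simp only [Nat.cast_zero, zero_mul, map_zero, add_zero]
    rw [WP, Finset.mul_sum]
    refine sum_congr rfl fun i hi => ?_
    have hi' : i ≤ n := Nat.lt_succ_iff.mp (mem_range.mp hi)
    rw [show n + 1 - i = (n - i) + 1 from by omega, pow_succ]
    simp only [map_mul]
    ring
  have h1 : ∑ i ∈ range (n+1), C ((n.choose i : ℝ) * c^(n-i)) * QP a b (i+1)
      = ((X - C a) + (X - C b)) * WP a b c n
        + C 2 * (X - C a) * (X - C b) * (WP a b c n).derivative := by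
    simp only [QP_succ]
    rw [WP, derivative_sum]
    simp only [derivative_C_mul]
    rw [Finset.mul_sum, Finset.mul_sum, ← sum_add_distrib]
    refine sum_congr rfl fun i hi => by ring
  rw [hW, hsum2, h1]
  ring

/-! ### The key derivative identity -/

lemma key (a b : ℝ) : ∀ n : ℕ,
    (C b - C a) * derivative (C 2 * (X - C a) * WP a b (a-b) n)
      = WP a b (b-a) (n+1) - WP a b (a-b) (n+1)
  | 0 => by
    rw [WP_succ, WP_succ]
    simp only [WP_zero, derivative_mul, derivative_one, derivative_sub, derivative_X,
      derivative_C, derivative_ofNat, sub_zero, mul_one, mul_zero, add_zero, zero_add,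
      map_sub, map_ofNat, zero_mul]
    ring
  | (n+1) => by
    have ih := key a b n
    have hV : WP a b (b-a) (n+1) = WP a b (a-b) (n+1)
        + (C b - C a) * derivative (C 2 * (X - C a) * WP a b (a-b) n) := by
      rw [ih]; ring
    rw [WP_succ a b (b-a) (n+1), WP_succ a b (a-b) (n+1), hV, WP_succ a b (a-b) n]
    simp only [derivative_mul, derivative_add, derivative_sub, derivative_X, derivative_C,
      derivative_ofNat, map_sub, map_ofNat, sub_zero, mul_one, mul_zero, add_zero, zero_add,
      zero_mul, derivative_one]
    ring

/-! ### Evaluation lemmas -/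

lemma QP_eval_b (a b : ℝ) (n : ℕ) : (QP a b n).eval b = (b-a)^n := by
  rw [QP, eval_finset_sum]
  rw [Finset.sum_eq_single 0]
  · simp [macmahon_one_right]
  · intro j hj hj0
    simp only [eval_mul, eval_pow, eval_sub, eval_X, eval_C, sub_self]
    rw [zero_pow hj0]
    ring
  · intro h
    exact absurd (mem_range.mpr (Nat.succ_pos n)) h

lemma WP_eval_b (a b c : ℝ) (n : ℕ) : (WP a b c n).eval b = ((b-a) + c)^n := by
  rw [WP, eval_finset_sum]
  simp only [eval_mul, eval_C, QP_eval_b]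
  rw [add_pow]
  exact sum_congr rfl fun i hi => by ring

/-! ### Integration -/

lemma integral_derivative (a b : ℝ) (p : ℝ[X]) :
    ∫ u in a..b, (derivative p).eval u = p.eval b - p.eval a :=
  intervalIntegral.integral_eq_sub_of_hasDerivAt (fun x _ => p.hasDerivAt x)
    ((p.derivative.continuous).intervalIntegrable _ _)

noncomputable def II (a b : ℝ) (m : ℕ) : ℝ := ∫ u in a..b, (QP a b m).eval u

lemma integral_QP_sum (a b : ℝ) (s : Finset ℕ) (r : ℕ → ℝ) (g : ℕ → ℕ) :
    ∫ u in a..b, (∑ i ∈ s, C (r i) * QP a b (g i)).eval u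
      = ∑ i ∈ s, r i * II a b (g i) := by
  simp only [eval_finset_sum, eval_mul, eval_C]
  rw [intervalIntegral.integral_finset_sum]
  · exact sum_congr rfl fun i _ => intervalIntegral.integral_const_mul _ _
  · intro i _
    exact (continuous_const.mul ((QP a b (g i)).continuous)).intervalIntegrable _ _

/-- The fundamental recurrence for the integrals `I_i = ∫_a^b Q_i`. -/
lemma G1 (a b : ℝ) (n : ℕ) :
    ∑ i ∈ range (n+2), (Nat.choose (n+1) i : ℝ) * ((b-a)^(n+1-i) - (a-b)^(n+1-i)) * II a b i
      = (b-a) * (2*(b-a) * 0^n) := by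
  have hV : WP a b (b-a) (n+1) - WP a b (a-b) (n+1)
      = ∑ i ∈ range (n+2),
          C ((Nat.choose (n+1) i : ℝ) * ((b-a)^(n+1-i) - (a-b)^(n+1-i))) * QP a b i := by
    rw [WP, WP, ← sum_sub_distrib]
    refine sum_congr rfl fun i _ => ?_
    rw [← sub_mul, ← map_sub, ← mul_sub]
  calc
    ∑ i ∈ range (n+2), (Nat.choose (n+1) i : ℝ) * ((b-a)^(n+1-i) - (a-b)^(n+1-i)) * II a b i
        = ∫ u in a..b, (WP a b (b-a) (n+1) - WP a b (a-b) (n+1)).eval u := by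
      rw [hV, integral_QP_sum a b _ _ (fun i => i)]
    _ = ∫ u in a..b,
          ((C b - C a) * derivative (C 2 * (X - C a) * WP a b (a-b) n)).eval u := by
      rw [key]
    _ = (b-a) * (2*(b-a) * 0^n) := by
      rw [show (C b - C a : ℝ[X]) = C (b-a) from by rw [map_sub]]
      simp only [eval_mul, eval_C]
      rw [intervalIntegral.integral_const_mul, integral_derivative]
      simp only [eval_mul, eval_C, eval_sub, eval_X, WP_eval_b, sub_self, mul_zero, sub_zero]
      rw [show (b-a) + (a-b) = 0 from by ring]
      ring

/-! ### The Bernoulli side -/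

lemma bernPoly_eq (n : ℕ) (x : ℝ) :
    bernPoly n x
      = ∑ j ∈ range (n+1), (_root_.bernoulli j : ℝ) * (n.choose j : ℝ) * x^(n-j) := by
  rw [bernPoly, Polynomial.bernoulli, Polynomial.map_sum, eval_finset_sum]
  refine sum_congr rfl fun j hj => ?_
  rw [Polynomial.map_monomial, eval_monomial, eq_ratCast]
  push_cast
  ring

lemma two_pow_bernPoly_half (i : ℕ) :
    (2:ℝ)^i * bernPoly i (1/2)
      = ∑ j ∈ range (i+1), (_root_.bernoulli j : ℝ) * (i.choose j : ℝ) * 2^j := by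
  rw [bernPoly_eq, Finset.mul_sum]
  refine sum_congr rfl fun j hj => ?_
  have hj' : j ≤ i := Nat.lt_succ_iff.mp (mem_range.mp hj)
  have h2 : (2:ℝ)^i = 2^(i-j) * 2^j := by
    rw [← pow_add]; congr 1; omega
  rw [h2]
  have : ((1:ℝ)/2)^(i-j) = (2^(i-j))⁻¹ := by
    rw [one_div, inv_pow]
  rw [this]
  have hne : ((2:ℝ)^(i-j)) ≠ 0 := pow_ne_zero _ two_ne_zero
  field_simp

lemma Tsum (m : ℕ) :
    ∑ i ∈ range (m+1), (m.choose i : ℝ) * (1 - (-1)^(m-i)) * (2^i * bernPoly i (1/2))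
      = 2^m * (if m = 1 then 1 else 0) := by
  have hext : ∀ i ∈ range (m+1),
      (m.choose i : ℝ) * (1 - (-1)^(m-i)) * (2^i * bernPoly i (1/2))
      = ∑ j ∈ range (m+1),
          (m.choose i : ℝ) * (1 - (-1)^(m-i))
            * ((_root_.bernoulli j : ℝ) * (i.choose j : ℝ) * 2^j) := by
    intro i hi
    have hi' : i ≤ m := Nat.lt_succ_iff.mp (mem_range.mp hi)
    rw [two_pow_bernPoly_half, Finset.mul_sum]
    refine (Finset.sum_subset (by exact range_subset_range.mpr (by omega)) ?_)
    intro j hj hj'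
    have : i < j := by
      simp only [mem_range, Nat.lt_succ_iff] at hj hj'
      omega
    rw [Nat.choose_eq_zero_of_lt this]
    simp
  rw [sum_congr rfl hext, Finset.sum_comm]
  have hinner : ∀ j ∈ range (m+1),
      (∑ i ∈ range (m+1), (m.choose i : ℝ) * (1 - (-1)^(m-i))
          * ((_root_.bernoulli j : ℝ) * (i.choose j : ℝ) * 2^j))
      = (_root_.bernoulli j : ℝ) * 2^j * (m.choose j : ℝ) * (2^(m-j) - 0^(m-j)) := by
    intro j hj
    have hj' : j ≤ m := Nat.lt_succ_iff.mp (mem_range.mp hj)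
    rw [← Finset.sum_subset (show Finset.Ico j (m+1) ⊆ range (m+1) from by
        rw [Finset.range_eq_Ico]; exact Finset.Ico_subset_Ico (by omega) le_rfl) ?_]
    · rw [Finset.sum_Ico_eq_sum_range]
      have hm : m + 1 - j = (m - j) + 1 := by omega
      rw [hm]
      have hterm : ∀ s ∈ range ((m-j)+1),
          (m.choose (j+s) : ℝ) * (1 - (-1)^(m-(j+s)))
              * ((_root_.bernoulli j : ℝ) * ((j+s).choose j : ℝ) * 2^j)
          = (_root_.bernoulli j : ℝ) * 2^j * (m.choose j : ℝ)
              * (((m-j).choose s : ℝ) * (1 - (-1)^((m-j)-s))) := by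
        intro s hs
        have hs' : s ≤ m - j := Nat.lt_succ_iff.mp (mem_range.mp hs)
        have hchoose : (m.choose (j+s)) * ((j+s).choose j) = m.choose j * ((m-j).choose s) := by
          have := Nat.choose_mul (n := m) (show j ≤ j + s by omega)
          simpa [Nat.add_sub_cancel_left] using this
        have hcast : (m.choose (j+s) : ℝ) * ((j+s).choose j : ℝ)
            = (m.choose j : ℝ) * ((m-j).choose s : ℝ) := by
          exact_mod_cast congrArg (Nat.cast (R := ℝ)) hchoose
        have hexp : m - (j+s) = (m-j) - s := by omega
        rw [hexp]
        linear_combination ((1 - (-1:ℝ)^((m-j)-s)) * (_root_.bernoulli j : ℝ) * 2^j) * hcast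
      rw [sum_congr rfl hterm, ← Finset.mul_sum]
      congr 1
      have e1 : ∑ s ∈ range ((m-j)+1), (((m-j).choose s : ℝ)) = 2^(m-j) := by
        exact_mod_cast congrArg (Nat.cast (R := ℝ)) (Nat.sum_range_choose (m-j))
      have e2 : ∑ s ∈ range ((m-j)+1), (((m-j).choose s : ℝ)) * (-1)^((m-j)-s) = 0^(m-j) := by
        have := add_pow (1:ℝ) (-1) (m-j)
        simp only [one_pow, one_mul, add_neg_cancel] at this
        rw [this]
        exact sum_congr rfl fun s _ => by ring
      calc ∑ s ∈ range ((m-j)+1), (((m-j).choose s : ℝ)) * (1 - (-1)^((m-j)-s))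
          = (∑ s ∈ range ((m-j)+1), (((m-j).choose s : ℝ)))
            - ∑ s ∈ range ((m-j)+1), (((m-j).choose s : ℝ)) * (-1)^((m-j)-s) := by
            rw [← sum_sub_distrib]; exact sum_congr rfl fun s _ => by ring
        _ = 2^(m-j) - 0^(m-j) := by rw [e1, e2]
    · intro i hi hi'
      have : i < j := by
        simp only [mem_range] at hi
        simp only [Finset.mem_Ico] at hi'
        omega
      rw [Nat.choose_eq_zero_of_lt this]
      simp
  rw [sum_congr rfl hinner]
  have hsplit : ∑ j ∈ range (m+1),
      (_root_.bernoulli j : ℝ) * 2^j * (m.choose j : ℝ) * (2^(m-j) - 0^(m-j))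
      = (∑ j ∈ range (m+1), (_root_.bernoulli j : ℝ) * (m.choose j : ℝ) * 2^m)
        - (_root_.bernoulli m : ℝ) * 2^m := by
    have hterm2 : ∀ j ∈ range (m+1),
        (_root_.bernoulli j : ℝ) * 2^j * (m.choose j : ℝ) * (2^(m-j) - 0^(m-j))
        = (_root_.bernoulli j : ℝ) * (m.choose j : ℝ) * 2^m
          - (_root_.bernoulli j : ℝ) * 2^j * (m.choose j : ℝ) * 0^(m-j) := by
      intro j hj
      have hj' : j ≤ m := Nat.lt_succ_iff.mp (mem_range.mp hj)
      have h2 : (2:ℝ)^j * 2^(m-j) = 2^m := by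
        rw [← pow_add]; congr 1; omega
      linear_combination ((_root_.bernoulli j : ℝ) * (m.choose j : ℝ)) * h2
    rw [sum_congr rfl hterm2, Finset.sum_sub_distrib]
    congr 1
    rw [Finset.sum_eq_single m]
    · simp
    · intro j hj hjm
      have : j < m := by
        have := Nat.lt_succ_iff.mp (mem_range.mp hj); omega
      rw [zero_pow (show m - j ≠ 0 by omega)]
      ring
    · intro h
      exact absurd (mem_range.mpr (Nat.lt_succ_self m)) h
  rw [hsplit]
  have hb : ∑ j ∈ range (m+1), (_root_.bernoulli j : ℝ) * (m.choose j : ℝ) * 2^m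
      = ((if m = 1 then 1 else 0) + (_root_.bernoulli m : ℝ)) * 2^m := by
    rw [← Finset.sum_mul]
    congr 1
    rw [sum_range_succ]
    have : ∑ j ∈ range m, (_root_.bernoulli j : ℝ) * (m.choose j : ℝ)
        = (if m = 1 then 1 else 0) := by
      have hq := _root_.sum_bernoulli m
      have hcast : ((if m = 1 then (1:ℚ) else 0 : ℚ) : ℝ) = (if m = 1 then (1:ℝ) else 0) := by
        split_ifs <;> norm_num
      calc ∑ j ∈ range m, (_root_.bernoulli j : ℝ) * (m.choose j : ℝ)
          = ((∑ k ∈ range m, (m.choose k : ℚ) * _root_.bernoulli k : ℚ) : ℝ) := by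
            push_cast
            exact sum_congr rfl fun j _ => by ring
        _ = _ := by rw [hq, hcast]
    rw [this]
    simp
  rw [hb]
  ring

lemma G2 (a b : ℝ) (n : ℕ) :
    ∑ i ∈ range (n+2), (Nat.choose (n+1) i : ℝ) * ((b-a)^(n+1-i) - (a-b)^(n+1-i))
        * (2^i * (b-a)^(i+1) * bernPoly i (1/2))
      = (b-a) * (2*(b-a) * 0^n) := by
  have hterm : ∀ i ∈ range (n+2),
      (Nat.choose (n+1) i : ℝ) * ((b-a)^(n+1-i) - (a-b)^(n+1-i))
        * (2^i * (b-a)^(i+1) * bernPoly i (1/2))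
      = (b-a)^(n+2) * ((Nat.choose (n+1) i : ℝ) * (1 - (-1)^(n+1-i))
        * (2^i * bernPoly i (1/2))) := by
    intro i hi
    have hi' : i ≤ n + 1 := Nat.lt_succ_iff.mp (mem_range.mp hi)
    have hneg : (a-b)^(n+1-i) = (-1)^(n+1-i) * (b-a)^(n+1-i) := by
      rw [show a-b = -(b-a) from by ring, neg_pow]
    have hpow : (b-a)^(n+1-i) * (b-a)^(i+1) = (b-a)^(n+2) := by
      rw [← pow_add]; congr 1; omega
    rw [hneg]
    linear_combination ((Nat.choose (n+1) i : ℝ) * (1 - (-1)^(n+1-i))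
      * (2^i * bernPoly i (1/2))) * hpow
  rw [sum_congr rfl hterm, ← Finset.mul_sum, Tsum (n+1)]
  rcases n with _ | n
  · norm_num
    ring
  · simp

/-! ### Identification of the integrals -/

lemma II_eq (a b : ℝ) (hab : a < b) :
    ∀ m, II a b m = 2^m * (b-a)^(m+1) * bernPoly m (1/2) := by
  intro m
  induction m using Nat.strong_induction_on with
  | _ m ih =>
    have h1 := G1 a b m
    have h2 := G2 a b m
    have hsub : ∑ i ∈ range (m+2), (Nat.choose (m+1) i : ℝ)
        * ((b-a)^(m+1-i) - (a-b)^(m+1-i))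
        * (II a b i - 2^i * (b-a)^(i+1) * bernPoly i (1/2)) = 0 := by
      have : ∀ i ∈ range (m+2), (Nat.choose (m+1) i : ℝ)
          * ((b-a)^(m+1-i) - (a-b)^(m+1-i))
          * (II a b i - 2^i * (b-a)^(i+1) * bernPoly i (1/2))
          = (Nat.choose (m+1) i : ℝ) * ((b-a)^(m+1-i) - (a-b)^(m+1-i)) * II a b i
            - (Nat.choose (m+1) i : ℝ) * ((b-a)^(m+1-i) - (a-b)^(m+1-i))
              * (2^i * (b-a)^(i+1) * bernPoly i (1/2)) := by
        intro i _; ring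
      rw [sum_congr rfl this, Finset.sum_sub_distrib, h1, h2, sub_self]
    rw [sum_range_succ, sum_range_succ] at hsub
    have hz : ∑ i ∈ range m, (Nat.choose (m+1) i : ℝ)
        * ((b-a)^(m+1-i) - (a-b)^(m+1-i))
        * (II a b i - 2^i * (b-a)^(i+1) * bernPoly i (1/2)) = 0 := by
      refine Finset.sum_eq_zero fun i hi => ?_
      rw [ih i (mem_range.mp hi), sub_self, mul_zero]
    rw [hz, zero_add] at hsub
    have e1 : m + 1 - (m+1) = 0 := by omega
    have e2 : m + 1 - m = 1 := by omega
    rw [e1, e2] at hsub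
    simp only [pow_zero, sub_self, mul_zero, zero_mul, add_zero, pow_one] at hsub
    have hba : (b - a) ≠ 0 := sub_ne_zero.mpr hab.ne'
    have hc : ((Nat.choose (m+1) m : ℝ) * ((b-a) - (a-b))) ≠ 0 := by
      apply mul_ne_zero
      · exact Nat.cast_ne_zero.mpr (Nat.choose_pos (Nat.le_succ m)).ne'
      · intro h
        apply hba
        linarith [h]
    have := mul_eq_zero.mp (by linear_combination hsub :
      ((Nat.choose (m+1) m : ℝ) * ((b-a) - (a-b)))
        * (II a b m - 2^m * (b-a)^(m+1) * bernPoly m (1/2)) = 0)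
    rcases this with h | h
    · exact absurd h hc
    · linarith [h]

end IntegralSAux

open IntegralSAux Polynomial Finset in
theorem integral_S (n : ℕ) (hn : 1 ≤ n) (a b : ℝ) (hab : a < b) (d : ℝ) :
    ∫ u in a..b, S n a b d u =
      2 ^ n * (b - a) ^ (n + 1) * bernPoly n (1 / 2 + d / (b - a)) := by
  have hba : (b : ℝ) - a ≠ 0 := sub_ne_zero.mpr hab.ne'
  have hS : ∀ u, S n a b d u
      = (∑ k ∈ range (n+1), C ((n.choose k : ℝ) * (2*d)^k) * QP a b (n-k)).eval u := by
    intro u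
    rw [S, eval_finset_sum]
    refine sum_congr rfl fun k _ => ?_
    rw [Q_eq_eval, eval_mul, eval_C]
  rw [intervalIntegral.integral_congr (g := fun u =>
    (∑ k ∈ range (n+1), C ((n.choose k : ℝ) * (2*d)^k) * QP a b (n-k)).eval u)
    (fun u _ => hS u)]
  rw [integral_QP_sum a b _ _ (fun k => n - k)]
  have hII : ∀ k ∈ range (n+1), ((n.choose k : ℝ) * (2*d)^k) * II a b (n-k)
      = ((n.choose k : ℝ) * (2*d)^k) * (2^(n-k) * (b-a)^((n-k)+1) * bernPoly (n-k) (1/2)) := by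
    intro k _
    rw [II_eq a b hab (n-k)]
  rw [sum_congr rfl hII]
  -- rewrite each bernoulli polynomial value as a sum, extended to a full square
  have hdouble : ∀ k ∈ range (n+1),
      ((n.choose k : ℝ) * (2*d)^k) * (2^(n-k) * (b-a)^((n-k)+1) * bernPoly (n-k) (1/2))
      = ∑ j ∈ range (n+1), ((n.choose k : ℝ) * (2*d)^k) * ((b-a)^((n-k)+1)
          * ((_root_.bernoulli j : ℝ) * ((n-k).choose j : ℝ) * 2^j)) := by
    intro k hk
    have hk' : k ≤ n := Nat.lt_succ_iff.mp (mem_range.mp hk)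
    rw [show (2:ℝ)^(n-k) * (b-a)^((n-k)+1) * bernPoly (n-k) (1/2)
        = (b-a)^((n-k)+1) * ((2:ℝ)^(n-k) * bernPoly (n-k) (1/2)) from by ring]
    rw [two_pow_bernPoly_half, Finset.mul_sum, Finset.mul_sum]
    refine Finset.sum_subset (range_subset_range.mpr (by omega)) ?_
    intro j hj hj'
    have : n - k < j := by
      simp only [mem_range, Nat.lt_succ_iff] at hj hj'
      omega
    rw [Nat.choose_eq_zero_of_lt this]
    simp
  rw [sum_congr rfl hdouble, Finset.sum_comm]
  -- now compute the inner sums over k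
  have hchoose_tri : ∀ {j k : ℕ}, k + j ≤ n →
      n.choose k * (n - k).choose j = n.choose j * (n - j).choose k := by
    intro j k h
    have h1 := Nat.choose_mul (n := n) (show j ≤ n - k by omega)
    rw [Nat.choose_symm (show k ≤ n by omega)] at h1
    rw [h1]
    congr 1
    rw [show n - k - j = (n - j) - k from by omega,
      Nat.choose_symm (show k ≤ n - j by omega)]
  have hinner : ∀ j ∈ range (n+1),
      (∑ k ∈ range (n+1), ((n.choose k : ℝ) * (2*d)^k) * ((b-a)^((n-k)+1)
          * ((_root_.bernoulli j : ℝ) * ((n-k).choose j : ℝ) * 2^j)))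
      = (_root_.bernoulli j : ℝ) * (n.choose j : ℝ) * 2^j * (b-a)^(j+1)
          * (2*d + (b-a))^(n-j) := by
    intro j hj
    have hj' : j ≤ n := Nat.lt_succ_iff.mp (mem_range.mp hj)
    rw [← Finset.sum_subset (show range ((n-j)+1) ⊆ range (n+1) from
        range_subset_range.mpr (by omega)) ?_]
    · have hterm : ∀ k ∈ range ((n-j)+1),
          ((n.choose k : ℝ) * (2*d)^k) * ((b-a)^((n-k)+1)
            * ((_root_.bernoulli j : ℝ) * ((n-k).choose j : ℝ) * 2^j))
          = ((_root_.bernoulli j : ℝ) * (n.choose j : ℝ) * 2^j * (b-a)^(j+1))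
            * ((2*d)^k * (b-a)^((n-j)-k) * (((n-j).choose k : ℝ))) := by
        intro k hk
        have hk' : k ≤ n - j := Nat.lt_succ_iff.mp (mem_range.mp hk)
        have hkj : k + j ≤ n := by omega
        have hc : (n.choose k : ℝ) * ((n-k).choose j : ℝ)
            = (n.choose j : ℝ) * ((n-j).choose k : ℝ) := by
          exact_mod_cast congrArg (Nat.cast (R := ℝ)) (hchoose_tri hkj)
        have hp : ((b:ℝ)-a)^((n-k)+1) = (b-a)^(j+1) * (b-a)^((n-j)-k) := by
          rw [← pow_add]; congr 1; omega
        rw [hp]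
        linear_combination ((2*d)^k * ((b:ℝ)-a)^(j+1) * ((b:ℝ)-a)^((n-j)-k)
          * (_root_.bernoulli j : ℝ) * 2^j) * hc
      rw [sum_congr rfl hterm, ← Finset.mul_sum]
      have : ∑ k ∈ range ((n-j)+1), (2*d)^k * ((b:ℝ)-a)^((n-j)-k) * (((n-j).choose k : ℝ))
          = (2*d + (b-a))^(n-j) := (add_pow (2*d) (b-a) (n-j)).symm
      rw [this]
    · intro k hk hk'
      have : n - k < j := by
        simp only [mem_range, Nat.lt_succ_iff] at hk hk'
        omega
      rw [Nat.choose_eq_zero_of_lt this]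
      simp
  rw [sum_congr rfl hinner]
  -- finally, expand the right-hand side
  rw [bernPoly_eq n (1/2 + d/(b-a)), Finset.mul_sum]
  refine sum_congr rfl fun j hj => ?_
  have hj' : j ≤ n := Nat.lt_succ_iff.mp (mem_range.mp hj)
  have hx : 2*((b:ℝ)-a)*(1/2 + d/(b-a)) = 2*d + (b-a) := by
    field_simp
    ring
  have h2 : (2:ℝ)^n = 2^j * 2^(n-j) := by rw [← pow_add]; congr 1; omega
  have h3 : ((b:ℝ)-a)^(n+1) = (b-a)^(j+1) * (b-a)^(n-j) := by
    rw [← pow_add]; congr 1; omega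
  have hkey : (2:ℝ)^n * (b-a)^(n+1) * (1/2 + d/(b-a))^(n-j)
      = 2^j * (b-a)^(j+1) * (2*d + (b-a))^(n-j) := by
    rw [h2, h3, ← hx, mul_pow, mul_pow]
    ring
  linear_combination (-((_root_.bernoulli j : ℝ) * (n.choose j : ℝ))) * hkey
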